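/- Let 0 < q < 1 and let k ≥ 1, N ≥ 1 be integers. Then N·M(k,N)/[2k-1]_{q²}!! = (q^{2k-2Nk-k²}·(-q²;q²)_k / ((1-q^{2k})·(q²;q²)_k))·Φ(q²) + (q^{2k-k²}·(-q²;q²)_k / ((q^{2k}-1)·(q²;q²)_k))·Φ(q^{2(N+1)}), where Φ(z) = ∑_{a=0}^{k} ((-q^{2k+2};q²)_a·(q^{2k};q²)_a·(q^{-2k};q²)_a / ((-q²;q²)_a·(q^{2k+2};q²)_a·(q²;q²)_a))·z^a is a terminating basic hypergeometric ₃φ₂ sum. -/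

import Mathlib

/-- The q-Pochhammer symbol `(a;c)_n = ∏_{i=0}^{n-1} (1 - a c^i)`. -/
noncomputable def qPoch (a c : ℝ) (n : ℕ) : ℝ := ∏ i ∈ Finset.range n, (1 - a * c ^ i)

/-- The q²-double factorial `[2k-1]_{q²}!! = ∏_{j=1}^{k} (1 - q^{4j-2})/(1-q²)`. -/
noncomputable def qDF (q : ℝ) (k : ℕ) : ℝ :=
  ∏ j ∈ Finset.range k, (1 - q ^ (4 * j + 2)) / (1 - q ^ 2)

/-- The residue `res_{q^{2k}}`. -/
noncomputable def resR (q : ℝ) (k : ℕ) : ℝ :=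
  q ^ ((k : ℤ) * (1 - (k : ℤ))) * qDF q k * q ^ k *
    (∏ n ∈ Finset.Icc 1 k, (q ^ (2 * n) + q ^ (2 * k))) /
    ∏ n ∈ Finset.range (k + 1), (1 - q ^ (2 * n + 2 * k))

/-- The residue `res_{q^{-2a}}`. -/
noncomputable def resr (q : ℝ) (k a : ℕ) : ℝ :=
  q ^ ((k : ℤ) * (1 - (k : ℤ))) * qDF q k * q ^ ((k : ℤ) - 2 * (a : ℤ)) *
      q ^ (-(2 * (k : ℤ) * (a : ℤ))) *
    (∏ n ∈ Finset.Icc 1 k, (1 + q ^ (2 * n + 2 * a))) /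
    (q ^ (-(2 * (a : ℤ))) * (q ^ (2 * k + 2 * a) - 1) *
      (∏ n ∈ Finset.range a, (1 - q ^ (2 * (n : ℤ) - 2 * (a : ℤ)))) *
      ∏ n ∈ Finset.Icc (a + 1) k, (1 - q ^ (2 * (n : ℤ) - 2 * (a : ℤ))))

/-- `N · M(k,N)`, the (unnormalised) 2k-th moment of the discrete q-Hermite ensemble,
defined via the Morozov–Popolitov–Shakirov residue formula. -/
noncomputable def NM (q : ℝ) (k N : ℕ) : ℝ :=
  q ^ (-(2 * (N : ℤ) * (k : ℤ))) * resR q k +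
    ∑ a ∈ Finset.range (k + 1), q ^ (2 * N * a) * resr q k a

/-- The terminating ₃φ₂ sum `Φ(z)`. -/
noncomputable def Phi (q : ℝ) (k : ℕ) (z : ℝ) : ℝ :=
  ∑ a ∈ Finset.range (k + 1),
    (qPoch (-(q ^ (2 * k + 2))) (q ^ 2) a * qPoch (q ^ (2 * k)) (q ^ 2) a *
        qPoch (q ^ (-(2 * (k : ℤ)))) (q ^ 2) a) /
      (qPoch (-(q ^ 2)) (q ^ 2) a * qPoch (q ^ (2 * k + 2)) (q ^ 2) a *
        qPoch (q ^ 2) (q ^ 2) a) * z ^ a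


open Finset Polynomial

lemma qPoch_pos {a c : ℝ} (hc0 : 0 ≤ c) (hc1 : c ≤ 1) (ha : a < 1) (n : ℕ) :
    0 < qPoch a c n := by
  apply Finset.prod_pos
  intro i _
  have h1 : 0 ≤ c ^ i := pow_nonneg hc0 i
  have h2 : c ^ i ≤ 1 := pow_le_one₀ hc0 hc1
  rcases le_or_gt a 0 with h | h
  · nlinarith
  · nlinarith

lemma qPoch_add (a c : ℝ) (m n : ℕ) :
    qPoch a c (m + n) = qPoch a c m * qPoch (a * c ^ m) c n := by
  unfold qPoch
  rw [Finset.prod_range_add]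
  congr 1
  refine Finset.prod_congr rfl fun i _ => ?_
  ring

section
variable {q : ℝ}

lemma one_sub_pow_pos (hq0 : 0 < q) (hq1 : q < 1) {m : ℕ} (hm : m ≠ 0) :
    0 < 1 - q ^ m := by
  have := pow_lt_one₀ hq0.le hq1 hm
  linarith

lemma zpow_diff (hq : q ≠ 0) {e : ℤ} (b c : ℕ) (h : e = (b:ℤ) - (c:ℤ)) :
    q ^ e = q ^ b / q ^ c := by
  subst h
  rw [zpow_sub₀ hq, zpow_natCast, zpow_natCast]

lemma zpow_neg_nat {e : ℤ} (b : ℕ) (h : e = -(b:ℤ)) : q ^ e = (q^b)⁻¹ := by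
  rw [h, zpow_neg, zpow_natCast]

lemma one_sub_zpow_neg (hq : q ≠ 0) (b : ℕ) (e : ℤ) (h : e = -(b:ℤ)) :
    (1:ℝ) - q ^ e = -(1 - q ^ b) / q ^ b := by
  subst h
  rw [zpow_neg, zpow_natCast]
  have hb : q ^ b ≠ 0 := pow_ne_zero _ hq
  field_simp
  ring

lemma sum_twice_sub (a : ℕ) : ∑ n ∈ Finset.range a, 2*(a-n) = a*a + a := by
  rw [← Finset.sum_range_reflect]
  have h1 : ∀ n ∈ Finset.range a, 2*(a - (a-1-n)) = 2*n+2 := by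
    intro n hn
    rw [Finset.mem_range] at hn
    omega
  rw [Finset.sum_congr rfl h1]
  have h2 := Finset.sum_range_id_mul_two a
  have h3 : ∑ n ∈ Finset.range a, (2*n+2) = 2*(∑ n ∈ Finset.range a, n) + 2*a := by
    rw [Finset.sum_add_distrib, Finset.sum_const, Finset.card_range, ← Finset.mul_sum,
      smul_eq_mul]
    ring
  have h4 : a*(a-1) + a = a*a := by
    cases a with
    | zero => simp
    | succ b => simp [Nat.succ_sub_one]; ring
  omega

lemma sum_two_id (n : ℕ) : (∑ j ∈ Finset.range n, 2*j) + n = n*n := by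
  have h2 := Finset.sum_range_id_mul_two n
  have h3 : ∑ j ∈ Finset.range n, 2*j = (∑ j ∈ Finset.range n, j) * 2 := by
    rw [Finset.sum_mul]
    exact Finset.sum_congr rfl fun j _ => by ring
  have h4 : n*(n-1) + n = n*n := by
    cases n with
    | zero => simp
    | succ b => simp [Nat.succ_sub_one]; ring
  omega

-- PL1
lemma PL1 (a k : ℕ) :
    (∏ n ∈ Finset.Icc 1 k, (1 + q ^ (2*n + 2*a))) * qPoch (-(q^2)) (q^2) a
      = qPoch (-(q^2)) (q^2) k * qPoch (-(q^(2*k+2))) (q^2) a := by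
  have e1 : ∏ n ∈ Finset.Icc 1 k, (1 + q ^ (2*n + 2*a))
      = qPoch (-(q^2) * (q^2)^a) (q^2) k := by
    unfold qPoch
    rw [show Finset.Icc 1 k = Finset.Ico 1 (k+1) by rfl, Finset.prod_Ico_eq_prod_range]
    refine Finset.prod_congr (by congr 1) fun i _ => ?_
    ring
  rw [e1, mul_comm, ← qPoch_add, add_comm a k, qPoch_add,
    show (-(q^2) * (q^2)^k) = (-(q^(2*k+2))) by ring]

-- PL2
lemma PL2 (hq : q ≠ 0) (a : ℕ) :
    (∏ n ∈ Finset.range a, (1 - q ^ (2*(n:ℤ) - 2*(a:ℤ)))) * q^(a*a+a)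
      = (-1)^a * qPoch (q^2) (q^2) a := by
  have h1 : ∀ n ∈ Finset.range a, (1:ℝ) - q ^ (2*(n:ℤ) - 2*(a:ℤ))
      = -(1 - q ^ (2*(a-n))) / q ^ (2*(a-n)) := by
    intro n hn
    rw [Finset.mem_range] at hn
    exact one_sub_zpow_neg hq _ _ (by push_cast [Nat.cast_sub hn.le]; ring)
  rw [Finset.prod_congr rfl h1]
  have h2 : ∏ n ∈ Finset.range a, (1 - q ^ (2*(a-n))) = qPoch (q^2) (q^2) a := by
    unfold qPoch
    rw [← Finset.prod_range_reflect]
    refine Finset.prod_congr rfl fun n hn => ?_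
    rw [Finset.mem_range] at hn
    rw [show a - (a-1-n) = n+1 by omega]
    ring
  have h3 : ∏ n ∈ Finset.range a, (q:ℝ) ^ (2*(a-n)) = q ^ (a*a+a) := by
    rw [Finset.prod_pow_eq_pow_sum, sum_twice_sub]
  have hqp : (q:ℝ) ^ (a*a+a) ≠ 0 := pow_ne_zero _ hq
  have hsplit : (∏ n ∈ Finset.range a, (-(1 - q ^ (2*(a-n))) / q ^ (2*(a-n))))
      = ((∏ n ∈ Finset.range a, (-1 : ℝ)) * ∏ n ∈ Finset.range a, (1 - q ^ (2*(a-n))))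
          / (∏ n ∈ Finset.range a, (q:ℝ) ^ (2*(a-n))) := by
    rw [← Finset.prod_mul_distrib, ← Finset.prod_div_distrib]
    exact Finset.prod_congr rfl fun n _ => by ring
  rw [hsplit, h2, h3, Finset.prod_const, Finset.card_range]
  field_simp

-- PL3
lemma PL3 (hq0 : 0 < q) (a m : ℕ) :
    ∏ n ∈ Finset.Icc (a+1) (a+m), (1 - q ^ (2*(n:ℤ) - 2*(a:ℤ)))
      = qPoch (q^2) (q^2) m := by
  unfold qPoch
  rw [show Finset.Icc (a+1) (a+m) = Finset.Ico (a+1) (a+m+1) by rfl,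
    Finset.prod_Ico_eq_prod_range]
  refine Finset.prod_congr (by congr 1; omega) fun i _ => ?_
  rw [show 2*(((a+1+i : ℕ)):ℤ) - 2*(a:ℤ) = ((2*i+2 : ℕ) : ℤ) by push_cast; ring,
    zpow_natCast]
  ring

-- PL4
lemma PL4 (hq : q ≠ 0) (a k : ℕ) (ha : a ≤ k) :
    qPoch (q ^ (-(2 * (k:ℤ)))) (q^2) a * (q ^ (a + 2*k*a) * qPoch (q^2) (q^2) (k-a))
      = (-1)^a * q^(a*a) * qPoch (q^2) (q^2) k := by
  rcases Nat.le.dest ha with ⟨m, rfl⟩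
  rw [show a + m - a = m by omega]
  have h1 : ∀ i ∈ Finset.range a, (1:ℝ) - q ^ (-(2*((a+m : ℕ):ℤ))) * (q^2)^i
      = -(1 - q ^ (2*(a+m-i))) / q ^ (2*(a+m-i)) := by
    intro i hi
    rw [Finset.mem_range] at hi
    have e1 : (q:ℝ) ^ (-(2*((a+m : ℕ):ℤ))) * (q^2)^i = q ^ (2*(i:ℤ) - 2*((a+m:ℕ):ℤ)) := by
      rw [show ((q:ℝ)^2)^i = q ^ ((2*i : ℕ):ℤ) by rw [zpow_natCast]; ring,
        ← zpow_add₀ hq]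
      congr 1
      push_cast
      ring
    rw [e1]
    exact one_sub_zpow_neg hq _ _ (by push_cast [Nat.cast_sub (show i ≤ a+m by omega)]; ring)
  have h2 : ∏ i ∈ Finset.range a, (1 - q ^ (2*(a+m-i)))
      = qPoch (q^2 * (q^2)^m) (q^2) a := by
    unfold qPoch
    rw [← Finset.prod_range_reflect]
    refine Finset.prod_congr rfl fun i hi => ?_
    rw [Finset.mem_range] at hi
    rw [show a + m - (a-1-i) = m + i + 1 by omega]
    ring
  have h3 : ∏ i ∈ Finset.range a, (q:ℝ) ^ (2*(a+m-i)) = q ^ (∑ i ∈ Finset.range a, 2*(a+m-i)) :=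
    Finset.prod_pow_eq_pow_sum _ _ _
  have hsum : (∑ i ∈ Finset.range a, 2*(a+m-i)) + a*a = a + 2*(a+m)*a := by
    have h4 : ∀ i ∈ Finset.range a, 2*(a+m-i) = 2*m + 2*(a-i) := by
      intro i hi; rw [Finset.mem_range] at hi; omega
    rw [Finset.sum_congr rfl h4, Finset.sum_add_distrib, Finset.sum_const, Finset.card_range,
      sum_twice_sub, smul_eq_mul]
    ring
  have h5 : qPoch (q^2) (q^2) m * qPoch (q^2 * (q^2)^m) (q^2) a
      = qPoch (q^2) (q^2) (a+m) := by
    rw [← qPoch_add, show m + a = a + m by omega]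
  have hqS : (q:ℝ) ^ (∑ i ∈ Finset.range a, 2*(a+m-i)) ≠ 0 := pow_ne_zero _ hq
  have lhs1 : qPoch (q ^ (-(2 * ((a+m:ℕ):ℤ)))) (q^2) a
      = (-1)^a * qPoch (q^2 * (q^2)^m) (q^2) a
          / q ^ (∑ i ∈ Finset.range a, 2*(a+m-i)) := by
    conv_lhs => rw [qPoch]
    rw [Finset.prod_congr rfl h1]
    have hsplit : (∏ n ∈ Finset.range a, (-(1 - q ^ (2*(a+m-n))) / q ^ (2*(a+m-n))))
        = ((∏ n ∈ Finset.range a, (-1 : ℝ)) * ∏ n ∈ Finset.range a, (1 - q ^ (2*(a+m-n))))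
            / (∏ n ∈ Finset.range a, (q:ℝ) ^ (2*(a+m-n))) := by
      rw [← Finset.prod_mul_distrib, ← Finset.prod_div_distrib]
      exact Finset.prod_congr rfl fun n _ => by ring
    rw [hsplit, h2, h3, Finset.prod_const, Finset.card_range]
  rw [lhs1]
  have hq2 : (q:ℝ) ^ (a + 2*(a+m)*a) = q ^ (∑ i ∈ Finset.range a, 2*(a+m-i)) * q ^ (a*a) := by
    rw [← pow_add, hsum]
  rw [hq2]
  have hrr : (-1:ℝ)^a * qPoch (q^2 * (q^2)^m) (q^2) a
        / q ^ (∑ i ∈ Finset.range a, 2*(a+m-i))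
        * (q ^ (∑ i ∈ Finset.range a, 2*(a+m-i)) * q^(a*a) * qPoch (q^2) (q^2) m)
      = (-1)^a * q^(a*a) * (qPoch (q^2) (q^2) m * qPoch (q^2 * (q^2)^m) (q^2) a)
        * (q ^ (∑ i ∈ Finset.range a, 2*(a+m-i)) / q ^ (∑ i ∈ Finset.range a, 2*(a+m-i))) := by
    ring
  rw [hrr, div_self hqS, mul_one, h5]

-- PL5
lemma PL5 (a k : ℕ) :
    qPoch (q^(2*k)) (q^2) a * (1 - q^(2*k+2*a))
      = (1 - q^(2*k)) * qPoch (q^(2*k+2)) (q^2) a := by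
  have h1 : qPoch (q^(2*k)) (q^2) (a+1)
      = qPoch (q^(2*k)) (q^2) a * (1 - q^(2*k+2*a)) := by
    unfold qPoch
    rw [Finset.prod_range_succ]
    congr 1
    ring
  have h2 : qPoch (q^(2*k)) (q^2) (a+1)
      = (1 - q^(2*k)) * qPoch (q^(2*k+2)) (q^2) a := by
    unfold qPoch
    rw [Finset.prod_range_succ']
    rw [mul_comm]
    congr 1
    · ring
    · refine Finset.prod_congr rfl fun i _ => ?_
      ring
  rw [← h1, h2]

end

lemma sum_eval_div_prod_sub_eq_zero {F : Type*} [Field F] {ι : Type*} [DecidableEq ι]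
    (s : Finset ι) (v : ι → F) (hvs : Set.InjOn v s) (p : F[X])
    (hdeg : p.degree < ((s.card - 1 : ℕ) : WithBot ℕ)) :
    ∑ i ∈ s, p.eval (v i) * (∏ j ∈ s.erase i, (v i - v j))⁻¹ = 0 := by
  have h1 : p = Lagrange.interpolate s v (fun i => p.eval (v i)) :=
    Lagrange.eq_interpolate hvs (lt_of_lt_of_le hdeg (by exact_mod_cast Nat.sub_le _ _))
  have h2 : p.coeff (s.card - 1) = 0 := coeff_eq_zero_of_degree_lt hdeg
  rw [h1, Lagrange.interpolate_apply, finset_sum_coeff] at h2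
  rw [← h2]
  refine Finset.sum_congr rfl fun i hi => ?_
  rw [coeff_C_mul]
  congr 1
  have hnd : (Lagrange.basis s v i).natDegree = s.card - 1 := Lagrange.natDegree_basis hvs hi
  have : (Lagrange.basis s v i).coeff (s.card - 1) = (Lagrange.basis s v i).leadingCoeff := by
    rw [Polynomial.leadingCoeff, hnd]
  rw [this, Lagrange.basis, leadingCoeff_prod, ← Finset.prod_inv_distrib]
  refine Finset.prod_congr rfl fun j hj => ?_
  have hij : v i ≠ v j := by
    have h2 := Finset.mem_erase.mp hj
    intro h
    exact h2.1 (hvs h2.2 hi h.symm)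
  rw [Lagrange.basisDivisor, leadingCoeff_mul, leadingCoeff_C,
    (monic_X_sub_C (v j)).leadingCoeff, mul_one]


noncomputable def nodeV (q : ℝ) (k : ℕ) : ℕ → ℝ :=
  fun j => if j ≤ k then q ^ (-(2*(j:ℤ))) else q^(2*k)

noncomputable def pNode (q : ℝ) (k : ℕ) : Polynomial ℝ :=
  ∏ n ∈ Finset.Icc 1 k, (Polynomial.X + Polynomial.C (q^(2*n)))

section
variable {q : ℝ}

-- C1 : node form of resR
lemma C1 (hq0 : 0 < q) (hq1 : q < 1) (k : ℕ) (hk : 1 ≤ k) :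
    (-1)^(k+1) * qDF q k * q^k / q^(2*(k*k)) *
      ((pNode q k).eval (nodeV q k (k+1)) *
        (∏ j ∈ (Finset.range (k+2)).erase (k+1), (nodeV q k (k+1) - nodeV q k j))⁻¹)
    = resR q k := by
  have hq : q ≠ 0 := ne_of_gt hq0
  have hvR : nodeV q k (k+1) = q^(2*k) := by
    unfold nodeV; rw [if_neg (by omega)]
  have herase : (Finset.range (k+2)).erase (k+1) = Finset.range (k+1) := by
    rw [Finset.range_add_one, Finset.erase_insert (by simp)]
  have heval : (pNode q k).eval (q^(2*k)) = ∏ n ∈ Finset.Icc 1 k, (q^(2*n) + q^(2*k)) := by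
    unfold pNode
    rw [Polynomial.eval_prod]
    exact Finset.prod_congr rfl fun n _ => by simp [add_comm]
  have hprod : ∏ j ∈ Finset.range (k+1), (q^(2*k) - nodeV q k j)
      = (-1)^(k+1) * (∏ n ∈ Finset.range (k+1), (1 - q ^ (2*n+2*k))) / q^(k*k+k) := by
    have h1 : ∀ j ∈ Finset.range (k+1), q^(2*k) - nodeV q k j
        = (-1) * (1 - q ^ (2*j+2*k)) / q^(2*j) := by
      intro j hj
      rw [Finset.mem_range] at hj
      unfold nodeV
      rw [if_pos (by omega), show (2*(j:ℤ)) = ((2*j:ℕ):ℤ) by push_cast; ring, zpow_neg,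
        zpow_natCast]
      have h2j : (q:ℝ)^(2*j) ≠ 0 := pow_ne_zero _ hq
      field_simp
      ring
    rw [Finset.prod_congr rfl h1]
    have hsplit : ∏ j ∈ Finset.range (k+1), ((-1) * (1 - q ^ (2*j+2*k)) / q^(2*j))
        = ((∏ _j ∈ Finset.range (k+1), (-1:ℝ)) * ∏ j ∈ Finset.range (k+1), (1 - q ^ (2*j+2*k)))
          / ∏ j ∈ Finset.range (k+1), (q:ℝ)^(2*j) := by
      rw [← Finset.prod_mul_distrib, ← Finset.prod_div_distrib]
    rw [hsplit, Finset.prod_const, Finset.card_range, Finset.prod_pow_eq_pow_sum]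
    have : ∑ j ∈ Finset.range (k+1), 2*j = k*k+k := by
      have := sum_two_id (k+1)
      have h5 : (k+1)*(k+1) = k*k + k + (k+1) := by ring
      omega
    rw [this]
  have hD : ∏ n ∈ Finset.range (k+1), (1 - q ^ (2*n+2*k)) ≠ 0 := by
    rw [Finset.prod_ne_zero_iff]
    exact fun n _ => (one_sub_pow_pos hq0 hq1 (by omega)).ne'
  rw [hvR, herase, heval, hprod]
  unfold resR
  rw [zpow_diff hq k (k*k) (by push_cast; ring)]
  field_simp
  ring_nf

-- C2 : node form of resr
set_option maxHeartbeats 1600000 in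
lemma C2 (hq0 : 0 < q) (hq1 : q < 1) (k a : ℕ) (hk : 1 ≤ k) (ha : a ≤ k) :
    (-1)^(k+1) * qDF q k * q^k / q^(2*(k*k)) *
      ((pNode q k).eval (nodeV q k a) *
        (∏ j ∈ (Finset.range (k+2)).erase a, (nodeV q k a - nodeV q k j))⁻¹)
    = resr q k a := by
  have hq : q ≠ 0 := ne_of_gt hq0
  have hq2a : (0:ℝ) ≤ q^2 := sq_nonneg q
  have hq2b : q^2 ≤ 1 := by nlinarith
  obtain ⟨m, rfl⟩ := Nat.le.dest ha
  have hPma : 0 < qPoch (q^2) (q^2) a := qPoch_pos hq2a hq2b (by nlinarith) a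
  have hPmm : 0 < qPoch (q^2) (q^2) m := qPoch_pos hq2a hq2b (by nlinarith) m
  have hva : nodeV q (a+m) a = q ^ (-(2*(a:ℤ))) := by
    unfold nodeV; rw [if_pos (by omega)]
  have h2ka' : (q:ℝ)^(2*(a+m)+2*a) - 1 ≠ 0 := by
    have := one_sub_pow_pos hq0 hq1 (show 2*(a+m)+2*a ≠ 0 by omega)
    intro h; apply this.ne'; linarith
  -- eval
  have heval : (pNode q (a+m)).eval (q ^ (-(2*(a:ℤ))))
      = (∏ n ∈ Finset.Icc 1 (a+m), (1 + q^(2*n+2*a))) / q^(2*a*(a+m)) := by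
    unfold pNode
    rw [Polynomial.eval_prod]
    have h1 : ∀ n ∈ Finset.Icc 1 (a+m),
        (X + C (q^(2*n))).eval (q ^ (-(2*(a:ℤ)))) = (1 + q^(2*n+2*a)) / q^(2*a) := by
      intro n _
      rw [eval_add, eval_X, eval_C,
        show (-(2*(a:ℤ))) = -((2*a : ℕ):ℤ) by push_cast; ring, zpow_neg, zpow_natCast]
      have h2a : (q:ℝ)^(2*a) ≠ 0 := pow_ne_zero _ hq
      field_simp
      ring
    rw [Finset.prod_congr rfl h1, Finset.prod_div_distrib, Finset.prod_const, Nat.card_Icc]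
    congr 1
    rw [show a+m+1-1 = a+m by omega, ← pow_mul]
  -- erase structure
  have herase : (Finset.range (a+m+2)).erase a
      = insert (a+m+1) ((Finset.range (a+m+1)).erase a) := by
    rw [Finset.range_add_one, Finset.erase_insert_of_ne (by omega)]
  have hmem : a+m+1 ∉ (Finset.range (a+m+1)).erase a := by simp
  have hsplitset : (Finset.range (a+m+1)).erase a
      = Finset.range a ∪ Finset.Icc (a+1) (a+m) := by
    ext j
    simp only [Finset.mem_erase, Finset.mem_range, Finset.mem_union, Finset.mem_Icc]
    omega
  have hdisj : Disjoint (Finset.range a) (Finset.Icc (a+1) (a+m)) := by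
    rw [Finset.disjoint_left]
    intro j hj hj'
    simp only [Finset.mem_range] at hj
    simp only [Finset.mem_Icc] at hj'
    omega
  -- node products
  have hfac : ∀ j : ℕ, j ≤ a + m →
      q ^ (-(2*(a:ℤ))) - nodeV q (a+m) j
        = (-1) * (1 - q ^ (2*(j:ℤ) - 2*(a:ℤ))) / q^(2*j) := by
    intro j hj
    unfold nodeV
    have hjd : (q:ℝ) ^ (2*(j:ℤ) - 2*(a:ℤ)) = q^(2*j)/q^(2*a) :=
      zpow_diff hq (2*j) (2*a) (by push_cast; ring)
    have hza : (q:ℝ) ^ (-(2*(a:ℤ))) = (q^(2*a))⁻¹ := zpow_neg_nat (2*a) (by push_cast; ring)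
    have hzj : (q:ℝ) ^ (-(2*(j:ℤ))) = (q^(2*j))⁻¹ := zpow_neg_nat (2*j) (by push_cast; ring)
    rw [if_pos hj, hjd, hza, hzj]
    have h2a : (q:ℝ)^(2*a) ≠ 0 := pow_ne_zero _ hq
    have h2j : (q:ℝ)^(2*j) ≠ 0 := pow_ne_zero _ hq
    field_simp
    ring
  have hn1 : ∏ j ∈ Finset.range a, (q ^ (-(2*(a:ℤ))) - nodeV q (a+m) j)
      = (-1)^a * (∏ n ∈ Finset.range a, (1 - q ^ (2*(n:ℤ) - 2*(a:ℤ))))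
        / (q^(a*a) / q^a) := by
    have h1 : ∀ j ∈ Finset.range a, q ^ (-(2*(a:ℤ))) - nodeV q (a+m) j
        = (-1) * (1 - q ^ (2*(j:ℤ) - 2*(a:ℤ))) / q^(2*j) := by
      intro j hj
      rw [Finset.mem_range] at hj
      exact hfac j (by omega)
    rw [Finset.prod_congr rfl h1]
    have hsplit : ∏ j ∈ Finset.range a, ((-1) * (1 - q ^ (2*(j:ℤ) - 2*(a:ℤ))) / q^(2*j))
        = ((∏ _j ∈ Finset.range a, (-1:ℝ))
            * ∏ j ∈ Finset.range a, (1 - q ^ (2*(j:ℤ) - 2*(a:ℤ))))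
          / ∏ j ∈ Finset.range a, (q:ℝ)^(2*j) := by
      rw [← Finset.prod_mul_distrib, ← Finset.prod_div_distrib]
    rw [hsplit, Finset.prod_const, Finset.card_range, Finset.prod_pow_eq_pow_sum]
    congr 1
    rw [eq_div_iff (pow_ne_zero _ hq), ← pow_add]
    congr 1
    have := sum_two_id a
    omega
  have hn2 : ∏ j ∈ Finset.Icc (a+1) (a+m), (q ^ (-(2*(a:ℤ))) - nodeV q (a+m) j)
      = (-1)^m * (∏ n ∈ Finset.Icc (a+1) (a+m), (1 - q ^ (2*(n:ℤ) - 2*(a:ℤ))))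
        / (q^((a+m)*(a+m)+(a+m)) / q^(a*a+a)) := by
    have h1 : ∀ j ∈ Finset.Icc (a+1) (a+m), q ^ (-(2*(a:ℤ))) - nodeV q (a+m) j
        = (-1) * (1 - q ^ (2*(j:ℤ) - 2*(a:ℤ))) / q^(2*j) := by
      intro j hj
      rw [Finset.mem_Icc] at hj
      exact hfac j hj.2
    rw [Finset.prod_congr rfl h1]
    have hsplit : ∏ j ∈ Finset.Icc (a+1) (a+m), ((-1) * (1 - q ^ (2*(j:ℤ) - 2*(a:ℤ))) / q^(2*j))
        = ((∏ _j ∈ Finset.Icc (a+1) (a+m), (-1:ℝ))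
            * ∏ j ∈ Finset.Icc (a+1) (a+m), (1 - q ^ (2*(j:ℤ) - 2*(a:ℤ))))
          / ∏ j ∈ Finset.Icc (a+1) (a+m), (q:ℝ)^(2*j) := by
      rw [← Finset.prod_mul_distrib, ← Finset.prod_div_distrib]
    rw [hsplit, Finset.prod_const, Nat.card_Icc, show a+m+1-(a+1) = m by omega,
      Finset.prod_pow_eq_pow_sum]
    congr 1
    rw [eq_div_iff (pow_ne_zero _ hq), ← pow_add]
    congr 1
    have hc : (∑ j ∈ Finset.range (a+1), 2*j) + ∑ j ∈ Finset.Icc (a+1) (a+m), 2*j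
        = ∑ j ∈ Finset.range (a+m+1), 2*j := by
      rw [Finset.range_eq_Ico, Finset.range_eq_Ico, show Finset.Icc (a+1) (a+m) = Finset.Ico (a+1) (a+m+1) from rfl]
      exact Finset.sum_Ico_consecutive (fun j : ℕ => 2*j) (show 0 ≤ a+1 by omega) (show a+1 ≤ a+m+1 by omega)
    have g1 := sum_two_id (a+1)
    have g2 := sum_two_id (a+m+1)
    have e1 : (a+1)*(a+1) = a*a + 2*a + 1 := by ring
    have e2 : (a+m+1)*(a+m+1) = (a+m)*(a+m) + 2*(a+m) + 1 := by ring
    omega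
  have hnR : q ^ (-(2*(a:ℤ))) - nodeV q (a+m) (a+m+1)
      = (-1) * (q^(2*(a+m)+2*a) - 1) / q^(2*a) := by
    unfold nodeV
    rw [if_neg (by omega), zpow_neg_nat (2*a) (by push_cast; ring)]
    have h2a : (q:ℝ)^(2*a) ≠ 0 := pow_ne_zero _ hq
    field_simp
    ring
  have hD1 : ∏ n ∈ Finset.range a, (1 - q ^ (2*(n:ℤ)-2*(a:ℤ)))
      = (-1)^a * qPoch (q^2) (q^2) a / q^(a*a+a) := by
    rw [eq_div_iff (pow_ne_zero _ hq)]
    exact PL2 hq a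
  rw [hva, heval, herase, Finset.prod_insert hmem, hsplitset, Finset.prod_union hdisj,
    hn1, hn2, hnR, hD1, PL3 hq0 a m]
  unfold resr
  rw [hD1, PL3 hq0 a m,
    zpow_diff hq (a+m) ((a+m)*(a+m)) (by push_cast; ring),
    zpow_diff hq (a+m) (2*a) (by push_cast; ring),
    zpow_diff hq 0 (2*(a+m)*a) (by push_cast; ring),
    zpow_diff hq 0 (2*a) (by push_cast; ring)]
  have hne1 : ((-1:ℝ))^a ≠ 0 := pow_ne_zero _ (by norm_num)
  have hne2 : ((-1:ℝ))^m ≠ 0 := pow_ne_zero _ (by norm_num)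
  have hX : (1:ℝ) - q^(a*4)*q^(m*2) ≠ 0 := by
    rw [← pow_add]
    exact (one_sub_pow_pos hq0 hq1 (by omega)).ne'
  field_simp [hPma.ne', hPmm.ne', hX]
  ring

lemma TW (hq0 : 0 < q) (hq1 : q < 1) (k a : ℕ) (hk : 1 ≤ k) (ha : a ≤ k) :
    resr q k a
      = qDF q k * (q ^ (2*(k:ℤ) - (k:ℤ)^2) * qPoch (-(q^2)) (q^2) k
          / ((q^(2*k) - 1) * qPoch (q^2) (q^2) k))
        * ((qPoch (-(q ^ (2*k+2))) (q^2) a * qPoch (q ^ (2*k)) (q^2) a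
            * qPoch (q ^ (-(2*(k:ℤ)))) (q^2) a)
          / (qPoch (-(q^2)) (q^2) a * qPoch (q ^ (2*k+2)) (q^2) a * qPoch (q^2) (q^2) a))
        * q ^ (2*a) := by
  have hq : q ≠ 0 := ne_of_gt hq0
  have hq2a : (0:ℝ) ≤ q^2 := sq_nonneg q
  have hq2b : q^2 ≤ 1 := by nlinarith
  have hPpa : 0 < qPoch (-(q^2)) (q^2) a := qPoch_pos hq2a hq2b (by nlinarith) a
  have hPpk : 0 < qPoch (-(q^2)) (q^2) k := qPoch_pos hq2a hq2b (by nlinarith) k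
  have hPma : 0 < qPoch (q^2) (q^2) a := qPoch_pos hq2a hq2b (by nlinarith) a
  have hPmk : 0 < qPoch (q^2) (q^2) k := qPoch_pos hq2a hq2b (by nlinarith) k
  have hPmm : 0 < qPoch (q^2) (q^2) (k-a) := qPoch_pos hq2a hq2b (by nlinarith) (k-a)
  have hqk2 : (q:ℝ)^(2*k+2) < 1 := pow_lt_one₀ hq0.le hq1 (by omega)
  have hPB : 0 < qPoch (q^(2*k+2)) (q^2) a := qPoch_pos hq2a hq2b hqk2 a
  have h2k : (1:ℝ) - q^(2*k) ≠ 0 := (one_sub_pow_pos hq0 hq1 (by omega)).ne'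
  have h2k' : (q:ℝ)^(2*k) - 1 ≠ 0 := by
    intro h; exact h2k (by linarith)
  have h2ka : (1:ℝ) - q^(2*k+2*a) ≠ 0 := (one_sub_pow_pos hq0 hq1 (by omega)).ne'
  have h2ka' : (q:ℝ)^(2*k+2*a) - 1 ≠ 0 := by
    intro h; exact h2ka (by linarith)
  -- rewrite the products
  have hP1 : ∏ n ∈ Finset.Icc 1 k, (1 + q ^ (2*n + 2*a))
      = qPoch (-(q^2)) (q^2) k * qPoch (-(q^(2*k+2))) (q^2) a / qPoch (-(q^2)) (q^2) a := by
    rw [eq_div_iff hPpa.ne']; exact PL1 a k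
  have hP2 : ∏ n ∈ Finset.range a, (1 - q ^ (2*(n:ℤ) - 2*(a:ℤ)))
      = (-1)^a * qPoch (q^2) (q^2) a / q^(a*a+a) := by
    rw [eq_div_iff (pow_ne_zero _ hq)]; exact PL2 hq a
  have hP4 : qPoch (q ^ (-(2 * (k:ℤ)))) (q^2) a
      = (-1)^a * q^(a*a) * qPoch (q^2) (q^2) k
          / (q ^ (a + 2*k*a) * qPoch (q^2) (q^2) (k-a)) := by
    rw [eq_div_iff (mul_ne_zero (pow_ne_zero _ hq) hPmm.ne')]; exact PL4 hq a k ha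
  have hP5 : qPoch (q^(2*k)) (q^2) a
      = (1 - q^(2*k)) * qPoch (q^(2*k+2)) (q^2) a / (1 - q^(2*k+2*a)) := by
    rw [eq_div_iff h2ka]; exact PL5 a k
  obtain ⟨m, rfl⟩ := Nat.le.dest ha
  have hP3 : ∏ n ∈ Finset.Icc (a+1) (a+m), (1 - q ^ (2*(n:ℤ) - 2*(a:ℤ)))
      = qPoch (q^2) (q^2) m := PL3 hq0 a m
  rw [show a + m - a = m by omega] at hP4 hPmm
  unfold resr
  rw [hP1, hP2, hP3, hP4, hP5,
    zpow_diff hq (a+m) ((a+m)*(a+m)) (by push_cast; ring),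
    zpow_diff hq (a+m) (2*a) (by push_cast; ring),
    zpow_diff hq 0 (2*(a+m)*a) (by push_cast; ring),
    zpow_diff hq 0 (2*a) (by push_cast; ring),
    zpow_diff hq (2*(a+m)) ((a+m)*(a+m)) (by push_cast; ring)]
  field_simp
  ring_nf
  simp only [pow_mul', neg_one_sq, one_pow, mul_one]

lemma RS (hq0 : 0 < q) (hq1 : q < 1) (k : ℕ) (hk : 1 ≤ k) :
    resR q k + ∑ a ∈ Finset.range (k+1), resr q k a = 0 := by
  have hq : q ≠ 0 := ne_of_gt hq0
  have hinj : Set.InjOn (nodeV q k) (Finset.range (k+2)) := by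
    intro i hi j hj hij
    simp only [Finset.coe_range, Set.mem_Iio] at hi hj
    unfold nodeV at hij
    by_cases hik : i ≤ k <;> by_cases hjk : j ≤ k
    · rw [if_pos hik, if_pos hjk] at hij
      have := zpow_right_injective₀ hq0 hq1.ne hij
      omega
    · rw [if_pos hik, if_neg hjk] at hij
      exfalso
      have hp1 : q^(2*k) < 1 := pow_lt_one₀ hq0.le hq1 (by omega)
      have h3 : q^(2*i) ≤ 1 := pow_le_one₀ hq0.le hq1.le
      have h4 : (0:ℝ) < q^(2*i) := pow_pos hq0 _
      have h5 : q^(2*i) * (q^(2*i))⁻¹ = 1 := mul_inv_cancel₀ h4.ne'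
      have h6 : (0:ℝ) < (q^(2*i))⁻¹ := inv_pos.mpr h4
      have hp2 : (1:ℝ) ≤ q ^ (-(2*(i:ℤ))) := by
        rw [zpow_neg_nat (2*i) (by push_cast; ring)]
        nlinarith
      rw [hij] at hp2
      linarith
    · rw [if_neg hik, if_pos hjk] at hij
      exfalso
      have hp1 : q^(2*k) < 1 := pow_lt_one₀ hq0.le hq1 (by omega)
      have h3 : q^(2*j) ≤ 1 := pow_le_one₀ hq0.le hq1.le
      have h4 : (0:ℝ) < q^(2*j) := pow_pos hq0 _
      have h5 : q^(2*j) * (q^(2*j))⁻¹ = 1 := mul_inv_cancel₀ h4.ne'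
      have h6 : (0:ℝ) < (q^(2*j))⁻¹ := inv_pos.mpr h4
      have hp2 : (1:ℝ) ≤ q ^ (-(2*(j:ℤ))) := by
        rw [zpow_neg_nat (2*j) (by push_cast; ring)]
        nlinarith
      rw [← hij] at hp2
      linarith
    · omega
  have hdeg : (pNode q k).degree < (((Finset.range (k+2)).card - 1 : ℕ) : WithBot ℕ) := by
    have hmon : ∀ n ∈ Finset.Icc 1 k, (Polynomial.X + Polynomial.C (q^(2*n))).Monic :=
      fun n _ => Polynomial.monic_X_add_C _
    have hmonic : (pNode q k).Monic := Polynomial.monic_prod_of_monic _ _ hmon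
    have hnd : (pNode q k).natDegree = k := by
      unfold pNode
      rw [Polynomial.natDegree_prod_of_monic _ _ hmon,
        Finset.sum_congr rfl (fun n _ => Polynomial.natDegree_X_add_C (q^(2*n))),
        Finset.sum_const, Nat.card_Icc, smul_eq_mul]
      omega
    rw [Polynomial.degree_eq_natDegree hmonic.ne_zero, hnd, Finset.card_range]
    rw [show k+2-1 = k+1 by omega]
    exact_mod_cast Nat.lt_succ_self k
  have h0 := sum_eval_div_prod_sub_eq_zero (Finset.range (k+2)) (nodeV q k) hinj (pNode q k) hdeg
  have hsum : resR q k + ∑ a ∈ Finset.range (k+1), resr q k a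
      = (-1)^(k+1) * qDF q k * q^k / q^(2*(k*k)) *
          ∑ i ∈ Finset.range (k+2), (pNode q k).eval (nodeV q k i) *
            (∏ j ∈ (Finset.range (k+2)).erase i, (nodeV q k i - nodeV q k j))⁻¹ := by
    rw [Finset.sum_range_succ
      (f := fun i => (pNode q k).eval (nodeV q k i) *
        (∏ j ∈ (Finset.range (k+2)).erase i, (nodeV q k i - nodeV q k j))⁻¹) (n := k+1),
      mul_add, Finset.mul_sum, add_comm]
    congr 1
    · exact Finset.sum_congr rfl fun a ha =>
        (C2 hq0 hq1 k a hk (by rw [Finset.mem_range] at ha; omega)).symm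
    · exact (C1 hq0 hq1 k hk).symm
  rw [hsum, h0, mul_zero]


end

theorem qHermite_moment_basic_hypergeometric
    (q : ℝ) (hq0 : 0 < q) (hq1 : q < 1) (k N : ℕ) (hk : 1 ≤ k) (hN : 1 ≤ N) :
    NM q k N / qDF q k =
      q ^ (2 * (k : ℤ) - 2 * (N : ℤ) * (k : ℤ) - (k : ℤ) ^ 2) * qPoch (-(q ^ 2)) (q ^ 2) k /
          ((1 - q ^ (2 * k)) * qPoch (q ^ 2) (q ^ 2) k) * Phi q k (q ^ 2) +
        q ^ (2 * (k : ℤ) - (k : ℤ) ^ 2) * qPoch (-(q ^ 2)) (q ^ 2) k /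
          ((q ^ (2 * k) - 1) * qPoch (q ^ 2) (q ^ 2) k) * Phi q k (q ^ (2 * (N + 1))) := by
  have hq : q ≠ 0 := ne_of_gt hq0
  have hqDF : qDF q k ≠ 0 := by
    unfold qDF
    rw [Finset.prod_ne_zero_iff]
    intro j _
    exact div_ne_zero (one_sub_pow_pos hq0 hq1 (by omega)).ne'
      (one_sub_pow_pos hq0 hq1 (by omega)).ne'
  have hres : resR q k = -∑ a ∈ Finset.range (k+1), resr q k a := by
    have := RS hq0 hq1 k hk
    linarith
  have e1 : ∑ a ∈ Finset.range (k+1), resr q k a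
      = ∑ a ∈ Finset.range (k+1),
          qDF q k * (q ^ (2*(k:ℤ) - (k:ℤ)^2) * qPoch (-(q^2)) (q^2) k
            / ((q^(2*k) - 1) * qPoch (q^2) (q^2) k))
          * ((qPoch (-(q ^ (2*k+2))) (q^2) a * qPoch (q ^ (2*k)) (q^2) a
              * qPoch (q ^ (-(2*(k:ℤ)))) (q^2) a)
            / (qPoch (-(q^2)) (q^2) a * qPoch (q ^ (2*k+2)) (q^2) a * qPoch (q^2) (q^2) a))
          * q ^ (2*a) :=
    Finset.sum_congr rfl fun a ha =>
      TW hq0 hq1 k a hk (by rw [Finset.mem_range] at ha; omega)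
  have e2 : ∑ a ∈ Finset.range (k+1), q ^ (2*N*a) * resr q k a
      = ∑ a ∈ Finset.range (k+1), q ^ (2*N*a) *
          (qDF q k * (q ^ (2*(k:ℤ) - (k:ℤ)^2) * qPoch (-(q^2)) (q^2) k
            / ((q^(2*k) - 1) * qPoch (q^2) (q^2) k))
          * ((qPoch (-(q ^ (2*k+2))) (q^2) a * qPoch (q ^ (2*k)) (q^2) a
              * qPoch (q ^ (-(2*(k:ℤ)))) (q^2) a)
            / (qPoch (-(q^2)) (q^2) a * qPoch (q ^ (2*k+2)) (q^2) a * qPoch (q^2) (q^2) a))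
          * q ^ (2*a)) :=
    Finset.sum_congr rfl fun a ha => by
      rw [TW hq0 hq1 k a hk (by rw [Finset.mem_range] at ha; omega)]
  rw [div_eq_iff hqDF]
  unfold NM Phi
  rw [hres, e1, e2, mul_neg, Finset.mul_sum, neg_add_eq_sub, ← Finset.sum_sub_distrib,
    Finset.mul_sum, Finset.mul_sum, ← Finset.sum_add_distrib, Finset.sum_mul]
  refine Finset.sum_congr rfl fun a ha => ?_
  have h2k : (1:ℝ) - q^(2*k) ≠ 0 := (one_sub_pow_pos hq0 hq1 (by omega)).ne'
  have h2k' : (q:ℝ)^(2*k) - 1 ≠ 0 := by intro h; exact h2k (by linarith)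
  have d1 : (q:ℝ) ^ (2*(k:ℤ) - (k:ℤ)^2) = q^(2*k)/q^(k*k) :=
    zpow_diff hq _ _ (by push_cast; ring)
  have d2 : (q:ℝ) ^ (2*(k:ℤ) - 2*(N:ℤ)*(k:ℤ) - (k:ℤ)^2) = q^(2*k)/q^(2*N*k + k*k) :=
    zpow_diff hq _ _ (by push_cast; ring)
  have d3 : (q:ℝ) ^ (-(2*(N:ℤ)*(k:ℤ))) = q^0/q^(2*N*k) :=
    zpow_diff hq _ _ (by push_cast; ring)
  have hc1 : ∀ x y : ℝ, x / ((1 - q^(2*k)) * y) = -(x / ((q^(2*k) - 1) * y)) := by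
    intro x y
    rw [show (1:ℝ) - q^(2*k) = -(q^(2*k)-1) by ring, neg_mul, div_neg]
  rw [hc1, d1, d2, d3, pow_zero]
  field_simp
  ring
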